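/- For any positive integers r, m, n, every coefficient of the one-variable polynomial ∑_{k=0}^{n-1} (2k+1) · S_k^{(r)}(x)^m is divisible by n, where S_n^{(r)}(x) := ∑_{k=0}^{n} C(n,k)^r · C(n+k,k)^r · x^k. -/

import Mathlib

/-- The one-variable Schmidt polynomial
`S_n^{(r)}(x) := ∑_{k=0}^{n} C(n,k)^r · C(n+k,k)^r · x^k`. -/
noncomputable def schmidtPoly (r n : ℕ) : Polynomial ℤ :=
  ∑ k ∈ Finset.range (n + 1),
    Polynomial.C (((n.choose k) ^ r * ((n + k).choose k) ^ r : ℕ) : ℤ) * Polynomial.X ^ k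

namespace SchmidtAux

/-- `U a k = C(k,a) * C(k+a,a)` as an integer. -/
def U (a k : ℕ) : ℤ := (k.choose a : ℤ) * ((k + a).choose a : ℤ)

/-- Linearization coefficients. -/
def N (a b c : ℕ) : ℤ := (c.choose a : ℤ) * (c.choose b : ℤ) * ((a + b).choose c : ℤ)

lemma zA (n k : ℕ) : ((k : ℤ) + 1) * (n.choose (k + 1) : ℤ) = (n.choose k : ℤ) * ((n : ℤ) - k) := by
  rcases le_or_gt k n with h | h
  · have h2 : ((n.choose (k + 1) * (k + 1) : ℕ) : ℤ) = ((n.choose k * (n - k) : ℕ) : ℤ) := by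
      rw [Nat.choose_succ_right_eq]
    push_cast [h] at h2
    linarith
  · rw [Nat.choose_eq_zero_of_lt h, Nat.choose_eq_zero_of_lt (h.trans (Nat.lt_succ_self k))]
    push_cast
    ring
lemma zB (n k : ℕ) : ((n : ℤ) + 1) * (n.choose k : ℤ) = ((n + 1).choose (k + 1) : ℤ) * ((k : ℤ) + 1) := by
  have := Nat.add_one_mul_choose_eq n k
  have h2 : ((Nat.succ n * n.choose k : ℕ) : ℤ) = (((n + 1).choose (k + 1) * Nat.succ k : ℕ) : ℤ) := by
    rw [this]
  push_cast at h2
  linarith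

lemma zPascal (n k : ℕ) : (((n + 1).choose (k + 1) : ℕ) : ℤ) = (n.choose k : ℤ) + (n.choose (k + 1) : ℤ) := by
  rw [Nat.choose_succ_succ]
  push_cast
  ring

/-- The basic recurrence `(a+1)^2 U_{a+1}(k) = (k(k+1) - a(a+1)) U_a(k)`. -/
lemma recU (a k : ℕ) :
    ((a : ℤ) + 1) ^ 2 * U (a + 1) k = ((k : ℤ) * ((k : ℤ) + 1) - (a : ℤ) * ((a : ℤ) + 1)) * U a k := by
  have h1 := zA k a
  have h2 := zB (k + a) a
  unfold U
  have hx : k + (a + 1) = (k + a) + 1 := rfl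
  rw [hx]
  push_cast at h2
  linear_combination ((a : ℤ) + 1) * (((k + a + 1).choose (a + 1) : ℤ)) * h1
    - ((k : ℤ) - a) * ((k.choose a : ℤ)) * h2


lemma keyAlg (α γ β A X Y Ca Cb Z P Q : ℤ)
    (h1 : (α + 1) * A = X * (γ + 1 - α))
    (e1 : (γ + 1) * Ca = X * (γ + 1 - α))
    (e2 : (γ + 1) * Cb = Y * (γ + 1 - β))
    (e3 : (α + 1) * Z = (γ + 1 - β) * P + (γ + α + 2) * Q) :
    (α + 1) ^ 2 * (A * Y * Z) =
      (γ + 1) ^ 2 * (Ca * Cb * P) + ((γ + 1) * (γ + 2) - α * (α + 1)) * (X * Y * Q) := by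
  linear_combination (α + 1) * Y * Z * h1 + X * (γ + 1 - α) * Y * e3
    - P * (Y * (γ + 1 - β) * e1 + (γ + 1) * Ca * e2)

/-- Key identity for the induction on linearization coefficients. -/
lemma keyId (a b c : ℕ) :
    ((a : ℤ) + 1) ^ 2 * N (a + 1) b (c + 1) =
      ((c : ℤ) + 1) ^ 2 * N a b c
        + (((c : ℤ) + 1) * ((c : ℤ) + 2) - (a : ℤ) * ((a : ℤ) + 1)) * N a b (c + 1) := by
  unfold N
  rw [show a + 1 + b = a + b + 1 by omega]
  have h1 := zA (c + 1) a
  have h2 := zB c a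
  have h3 := zB c b
  have h4 := zA (c + 1) b
  have e1 : ((c : ℤ) + 1) * (c.choose a : ℤ) = ((c + 1).choose a : ℤ) * ((c : ℤ) + 1 - a) := by
    push_cast at h1 h2 ⊢; linear_combination h2 + h1
  have e2 : ((c : ℤ) + 1) * (c.choose b : ℤ) = ((c + 1).choose b : ℤ) * ((c : ℤ) + 1 - b) := by
    push_cast at h3 h4 ⊢; linear_combination h3 + h4
  have h5 := zPascal (a + b) c
  have h6 := zA (a + b) c
  have e3 : ((a : ℤ) + 1) * (((a + b + 1)).choose (c + 1) : ℤ) =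
      ((c : ℤ) + 1 - b) * ((a + b).choose c : ℤ) + ((c : ℤ) + (a : ℤ) + 2) * ((a + b).choose (c + 1) : ℤ) := by
    push_cast at h5 h6 ⊢; linear_combination ((a : ℤ) + 1) * h5 - h6
  have h1' : ((a : ℤ) + 1) * ((c + 1).choose (a + 1) : ℤ) = ((c + 1).choose a : ℤ) * ((c : ℤ) + 1 - a) := by
    push_cast at h1 ⊢; linear_combination h1
  have := keyAlg (a : ℤ) (c : ℤ) (b : ℤ)
    ((c + 1).choose (a + 1) : ℤ) ((c + 1).choose a : ℤ) ((c + 1).choose b : ℤ)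
    (c.choose a : ℤ) (c.choose b : ℤ)
    ((a + b + 1).choose (c + 1) : ℤ) ((a + b).choose c : ℤ) ((a + b).choose (c + 1) : ℤ)
    h1' e1 e2 (by linear_combination e3)
  push_cast at this ⊢
  linear_combination this

lemma N_zero_of_lt {a b c : ℕ} (h : a + b < c) : N a b c = 0 := by
  unfold N
  rw [Nat.choose_eq_zero_of_lt h]
  push_cast; ring

lemma N_succ_zero (a b : ℕ) : N (a + 1) b 0 = 0 := by
  unfold N
  rw [Nat.choose_eq_zero_of_lt (Nat.succ_pos a)]
  push_cast; ring

lemma N_zero_mul (a b : ℕ) : (a : ℤ) * ((a : ℤ) + 1) * N a b 0 = 0 := by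
  cases a with
  | zero => push_cast; ring
  | succ a =>
      unfold N
      rw [Nat.choose_eq_zero_of_lt (Nat.succ_pos a)]
      push_cast; ring


lemma U_zero (k : ℕ) : U 0 k = 1 := by simp [U]

/-- Linearization: `U_a U_b = ∑_c N(a,b,c) U_c`. -/
lemma lin (b : ℕ) : ∀ a k, U a k * U b k = ∑ c ∈ Finset.range (a + b + 1), N a b c * U c k := by
  intro a
  induction a with
  | zero =>
      intro k
      rw [Finset.sum_eq_single_of_mem b (by simp [Finset.mem_range])]
      · simp [U_zero, N]
      · intro c hc hne
        have hcb : c < b := lt_of_le_of_ne (Nat.lt_succ_iff.mp (by simpa using hc)) hne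
        simp [N, Nat.choose_eq_zero_of_lt hcb]
  | succ a IH =>
      intro k
      have h2 : ((a : ℤ) + 1) ^ 2 ≠ 0 := by positivity
      apply mul_left_cancel₀ h2
      rw [show a + 1 + b + 1 = a + b + 1 + 1 by omega]
      have step1 : ((a : ℤ) + 1) ^ 2 * (U (a + 1) k * U b k)
          = ((k : ℤ) * ((k : ℤ) + 1) - (a : ℤ) * ((a : ℤ) + 1)) * (U a k * U b k) := by
        rw [← mul_assoc, recU a k]; ring
      rw [step1, IH k, Finset.mul_sum]
      have step2 : ∀ c ∈ Finset.range (a + b + 1),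
          ((k : ℤ) * ((k : ℤ) + 1) - (a : ℤ) * ((a : ℤ) + 1)) * (N a b c * U c k)
          = (((c : ℤ) + 1) ^ 2 * (N a b c * U (c + 1) k))
            + ((((c : ℤ)) * ((c : ℤ) + 1) - (a : ℤ) * ((a : ℤ) + 1)) * (N a b c * U c k)) := by
        intro c _
        have := recU c k
        linear_combination (- N a b c) * this
      rw [Finset.sum_congr rfl step2, Finset.sum_add_distrib]
      -- RHS
      rw [Finset.mul_sum]
      rw [Finset.sum_range_succ' (fun c => ((a : ℤ) + 1) ^ 2 * (N (a + 1) b c * U c k)) (a + b + 1)]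
      have hz0 : ((a : ℤ) + 1) ^ 2 * (N (a + 1) b 0 * U 0 k) = 0 := by
        rw [N_succ_zero]; ring
      rw [hz0, add_zero]
      -- second sum on LHS : shift index
      rw [Finset.sum_range_succ'
        (fun c => (((c : ℤ)) * ((c : ℤ) + 1) - (a : ℤ) * ((a : ℤ) + 1)) * (N a b c * U c k)) (a + b)]
      have hz1 : (((0 : ℕ) : ℤ) * (((0 : ℕ) : ℤ) + 1) - (a : ℤ) * ((a : ℤ) + 1)) * (N a b 0 * U 0 k) = 0 := by
        have := N_zero_mul a b
        push_cast
        linear_combination (- U 0 k) * this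
      push_cast at hz1 ⊢
      rw [hz1, add_zero]
      -- extend the shifted second sum from range (a+b) to range (a+b+1)
      have hext : ∑ i ∈ Finset.range (a + b),
            (((i : ℤ) + 1) * ((i : ℤ) + 1 + 1) - (a : ℤ) * ((a : ℤ) + 1)) *
              (N a b (i + 1) * U (i + 1) k)
          = ∑ i ∈ Finset.range (a + b + 1),
            (((i : ℤ) + 1) * ((i : ℤ) + 1 + 1) - (a : ℤ) * ((a : ℤ) + 1)) *
              (N a b (i + 1) * U (i + 1) k) := by
        rw [Finset.sum_range_succ, N_zero_of_lt (by omega : a + b < a + b + 1)]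
        simp
      rw [hext, ← Finset.sum_add_distrib]
      refine Finset.sum_congr rfl fun c _ => ?_
      have := keyId a b c
      push_cast at this ⊢
      linear_combination (- U (c + 1) k) * this

lemma U_eq (a n : ℕ) : U a n = ((2 * a).choose a : ℤ) * ((n + a).choose (2 * a) : ℤ) := by
  unfold U
  rcases le_or_gt a n with h | h
  · have h1 : 2 * a ≤ n + a := by omega
    have h2 : a ≤ 2 * a := by omega
    have := Nat.choose_mul (n := n + a) h2
    rw [show n + a - a = n by omega, show 2 * a - a = a by omega] at this
    have h3 : (((n + a).choose (2 * a) * (2 * a).choose a : ℕ) : ℤ)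
        = (((n + a).choose a * n.choose a : ℕ) : ℤ) := by rw [this]
    push_cast at h3
    linarith
  · rw [Nat.choose_eq_zero_of_lt h, Nat.choose_eq_zero_of_lt (by omega : n + a < 2 * a)]
    push_cast; ring

lemma stepAlg (n a cat C2aa C0 C1 U' : ℤ)
    (ha1 : a + 1 ≠ 0)
    (hc : (a + 1) * cat = C2aa)
    (hz : (2 * a + 1) * C1 = C0 * (n - a))
    (hU : U' = C2aa * C0) :
    n * ((2 * a + 1) * cat * C1) + (2 * n + 1) * U'
      = (n + 1) * ((2 * a + 1) * cat * (C0 + C1)) := by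
  apply mul_left_cancel₀ ha1
  linear_combination (2 * n + 1) * (a + 1) * hU
    + ((n * (2 * a + 1) * C1) - ((n + 1) * (2 * a + 1) * (C0 + C1))) * hc - C2aa * hz

/-- Closed form: `∑_{k<n} (2k+1) U_a(k) = n (2a+1) Catalan(a) C(n+a, 2a+1)`. -/
lemma sumU (a n : ℕ) :
    ∑ k ∈ Finset.range n, (2 * (k : ℤ) + 1) * U a k
      = (n : ℤ) * ((2 * (a : ℤ) + 1) * (catalan a : ℤ) * (((n + a).choose (2 * a + 1) : ℕ) : ℤ)) := by
  induction n with
  | zero => simp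
  | succ n IH =>
      rw [Finset.sum_range_succ, IH]
      have hc : ((a : ℤ) + 1) * (catalan a : ℤ) = ((2 * a).choose a : ℤ) := by
        have := succ_mul_catalan_eq_centralBinom a
        rw [Nat.centralBinom_eq_two_mul_choose] at this
        have h3 : (((a + 1) * catalan a : ℕ) : ℤ) = (((2 * a).choose a : ℕ) : ℤ) := by rw [this]
        push_cast at h3
        linarith
      have hz := zA (n + a) (2 * a)
      have hU := U_eq a n
      have hP : (((n + 1 + a).choose (2 * a + 1) : ℕ) : ℤ)
          = ((n + a).choose (2 * a) : ℤ) + ((n + a).choose (2 * a + 1) : ℤ) := by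
        rw [show n + 1 + a = (n + a) + 1 by omega]
        exact zPascal (n + a) (2 * a)
      rw [hP]
      have := stepAlg (n : ℤ) (a : ℤ) (catalan a : ℤ) ((2 * a).choose a : ℤ)
        ((n + a).choose (2 * a) : ℤ) ((n + a).choose (2 * a + 1) : ℤ) (U a n)
        (by positivity) hc (by push_cast at hz ⊢; linear_combination hz) hU
      push_cast at this ⊢
      linear_combination this


/-- `f : ℕ → ℤ` is an integer combination of the `U a`. -/
def InSpan (f : ℕ → ℤ) : Prop :=
  ∃ d : ℕ, ∃ c : ℕ → ℤ, ∀ k, f k = ∑ a ∈ Finset.range d, c a * U a k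

lemma inSpan_const (z : ℤ) : InSpan (fun _ => z) :=
  ⟨1, fun _ => z, fun k => by simp [U]⟩

lemma inSpan_U (a : ℕ) : InSpan (U a) := by
  refine ⟨a + 1, fun i => if i = a then 1 else 0, fun k => ?_⟩
  rw [Finset.sum_eq_single_of_mem a (by simp)]
  · simp
  · intro b _ hb; simp [hb]

lemma rep_extend {d D : ℕ} (h : d ≤ D) (c : ℕ → ℤ) (k : ℕ) :
    ∑ a ∈ Finset.range d, c a * U a k
      = ∑ a ∈ Finset.range D, (if a < d then c a else 0) * U a k := by
  have hs : ∑ a ∈ Finset.range d, (if a < d then c a else 0) * U a k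
      = ∑ a ∈ Finset.range D, (if a < d then c a else 0) * U a k := by
    refine Finset.sum_subset (Finset.range_subset_range.mpr h) fun x _ hx => ?_
    rw [if_neg (by simpa using hx)]
    ring
  rw [← hs]
  exact Finset.sum_congr rfl fun a ha => by rw [if_pos (Finset.mem_range.mp ha)]

lemma inSpan_add {f g : ℕ → ℤ} (hf : InSpan f) (hg : InSpan g) :
    InSpan (fun k => f k + g k) := by
  obtain ⟨d1, c1, h1⟩ := hf
  obtain ⟨d2, c2, h2⟩ := hg
  refine ⟨max d1 d2, fun a => (if a < d1 then c1 a else 0) + (if a < d2 then c2 a else 0),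
    fun k => ?_⟩
  dsimp only
  rw [h1 k, h2 k, rep_extend (le_max_left d1 d2) c1 k, rep_extend (le_max_right d1 d2) c2 k,
    ← Finset.sum_add_distrib]
  refine Finset.sum_congr rfl fun a _ => ?_
  ring

lemma inSpan_mul {f g : ℕ → ℤ} (hf : InSpan f) (hg : InSpan g) :
    InSpan (fun k => f k * g k) := by
  obtain ⟨d1, c1, h1⟩ := hf
  obtain ⟨d2, c2, h2⟩ := hg
  refine ⟨d1 + d2, fun c => ∑ a ∈ Finset.range d1, ∑ b ∈ Finset.range d2,
    c1 a * c2 b * N a b c, fun k => ?_⟩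
  dsimp only
  rw [h1 k, h2 k, Finset.sum_mul_sum]
  have hterm : ∀ a ∈ Finset.range d1, ∀ b ∈ Finset.range d2,
      (c1 a * U a k) * (c2 b * U b k)
        = ∑ c ∈ Finset.range (d1 + d2), c1 a * c2 b * N a b c * U c k := by
    intro a ha b hb
    have hab : a + b + 1 ≤ d1 + d2 := by
      have := Finset.mem_range.mp ha
      have := Finset.mem_range.mp hb
      omega
    have hlin := lin b a k
    calc (c1 a * U a k) * (c2 b * U b k) = c1 a * c2 b * (U a k * U b k) := by ring
      _ = c1 a * c2 b * ∑ c ∈ Finset.range (a + b + 1), N a b c * U c k := by rw [hlin]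
      _ = ∑ c ∈ Finset.range (a + b + 1), c1 a * c2 b * N a b c * U c k := by
          rw [Finset.mul_sum]; exact Finset.sum_congr rfl fun c _ => by ring
      _ = ∑ c ∈ Finset.range (d1 + d2), c1 a * c2 b * N a b c * U c k := by
          refine Finset.sum_subset (Finset.range_subset_range.mpr hab) fun c _ hc => ?_
          rw [N_zero_of_lt (by simpa [Nat.lt_succ_iff, not_le] using hc : a + b < c)]
          ring
  calc ∑ a ∈ Finset.range d1, ∑ b ∈ Finset.range d2, (c1 a * U a k) * (c2 b * U b k)
      = ∑ a ∈ Finset.range d1, ∑ b ∈ Finset.range d2,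
          ∑ c ∈ Finset.range (d1 + d2), c1 a * c2 b * N a b c * U c k :=
        Finset.sum_congr rfl fun a ha => Finset.sum_congr rfl fun b hb => hterm a ha b hb
    _ = ∑ c ∈ Finset.range (d1 + d2), ∑ a ∈ Finset.range d1, ∑ b ∈ Finset.range d2,
          c1 a * c2 b * N a b c * U c k := by
        rw [show (∑ a ∈ Finset.range d1, ∑ b ∈ Finset.range d2,
            ∑ c ∈ Finset.range (d1 + d2), c1 a * c2 b * N a b c * U c k)
          = ∑ a ∈ Finset.range d1, ∑ c ∈ Finset.range (d1 + d2), ∑ b ∈ Finset.range d2,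
            c1 a * c2 b * N a b c * U c k from
          Finset.sum_congr rfl fun a _ => Finset.sum_comm]
        exact Finset.sum_comm
    _ = ∑ c ∈ Finset.range (d1 + d2), (∑ a ∈ Finset.range d1, ∑ b ∈ Finset.range d2,
          c1 a * c2 b * N a b c) * U c k := by
        refine Finset.sum_congr rfl fun c _ => ?_
        rw [Finset.sum_mul]
        exact Finset.sum_congr rfl fun a _ => by rw [Finset.sum_mul]

lemma inSpan_pow {f : ℕ → ℤ} (hf : InSpan f) (r : ℕ) : InSpan (fun k => f k ^ r) := by
  induction r with
  | zero => simpa using inSpan_const 1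
  | succ r IH =>
      have := inSpan_mul IH hf
      simpa [pow_succ] using this

lemma inSpan_sum {ι : Type*} (s : Finset ι) (F : ι → ℕ → ℤ)
    (h : ∀ i ∈ s, InSpan (F i)) : InSpan (fun k => ∑ i ∈ s, F i k) := by
  classical
  induction s using Finset.induction_on with
  | empty => simpa using inSpan_const 0
  | insert _ _ hx IH =>
      rename_i x s'
      have h1 := h x (Finset.mem_insert_self x s')
      have h2 := IH fun i hi => h i (Finset.mem_insert_of_mem hi)
      have := inSpan_add h1 h2
      convert this using 1
      funext k
      rw [Finset.sum_insert hx]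

lemma dvd_weighted_sum {f : ℕ → ℤ} (hf : InSpan f) (n : ℕ) :
    (n : ℤ) ∣ ∑ k ∈ Finset.range n, (2 * (k : ℤ) + 1) * f k := by
  obtain ⟨d, c, h⟩ := hf
  have hswap : ∑ k ∈ Finset.range n, (2 * (k : ℤ) + 1) * f k
      = ∑ a ∈ Finset.range d, c a * ∑ k ∈ Finset.range n, (2 * (k : ℤ) + 1) * U a k := by
    calc ∑ k ∈ Finset.range n, (2 * (k : ℤ) + 1) * f k
        = ∑ k ∈ Finset.range n, ∑ a ∈ Finset.range d, (2 * (k : ℤ) + 1) * (c a * U a k) := by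
          refine Finset.sum_congr rfl fun k _ => ?_
          rw [h k, Finset.mul_sum]
      _ = ∑ a ∈ Finset.range d, ∑ k ∈ Finset.range n, (2 * (k : ℤ) + 1) * (c a * U a k) :=
          Finset.sum_comm

      _ = ∑ a ∈ Finset.range d, c a * ∑ k ∈ Finset.range n, (2 * (k : ℤ) + 1) * U a k := by
          refine Finset.sum_congr rfl fun a _ => ?_
          rw [Finset.mul_sum]
          exact Finset.sum_congr rfl fun k _ => by ring
  rw [hswap]
  refine Finset.dvd_sum fun a _ => ?_
  rw [sumU a n]
  exact dvd_mul_of_dvd_right (dvd_mul_right _ _) _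


lemma coeff_schmidt {r : ℕ} (hr : 0 < r) (k i : ℕ) :
    (schmidtPoly r k).coeff i = (U i k) ^ r := by
  unfold schmidtPoly
  rw [Polynomial.finset_sum_coeff]
  have : ∀ j ∈ Finset.range (k + 1),
      (Polynomial.C (((k.choose j) ^ r * ((k + j).choose j) ^ r : ℕ) : ℤ) *
        Polynomial.X ^ j).coeff i
      = if i = j then (((k.choose j) ^ r * ((k + j).choose j) ^ r : ℕ) : ℤ) else 0 := by
    intro j _
    rw [Polynomial.coeff_C_mul, Polynomial.coeff_X_pow]
    split <;> simp
  rw [Finset.sum_congr rfl this, Finset.sum_ite_eq (Finset.range (k + 1)) i]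
  rcases le_or_gt i k with h | h
  · rw [if_pos (Finset.mem_range.mpr (by omega))]
    unfold U
    push_cast
    ring
  · rw [if_neg (by simp [Finset.mem_range]; omega)]
    unfold U
    rw [Nat.choose_eq_zero_of_lt h]
    obtain ⟨r', rfl⟩ : ∃ r', r = r' + 1 := ⟨r - 1, by omega⟩
    push_cast
    ring

lemma inSpan_coeff_pow (r m : ℕ) (hr : 0 < r) (d : ℕ) :
    InSpan (fun k => ((schmidtPoly r k) ^ m).coeff d) := by
  induction m generalizing d with
  | zero =>
      have : (fun k => ((schmidtPoly r k) ^ 0).coeff d)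
          = fun _ : ℕ => ((1 : Polynomial ℤ).coeff d) := by
        funext k; rw [pow_zero]
      rw [this]
      exact inSpan_const _
  | succ m IH =>
      have hrw : (fun k => ((schmidtPoly r k) ^ (m + 1)).coeff d)
          = fun k => ∑ x ∈ Finset.HasAntidiagonal.antidiagonal d,
              ((schmidtPoly r k) ^ m).coeff x.1 * ((U x.2 k) ^ r) := by
        funext k
        rw [pow_succ, Polynomial.coeff_mul]
        exact Finset.sum_congr rfl fun x _ => by rw [coeff_schmidt hr]
      rw [hrw]
      exact inSpan_sum _ _ fun x _ => inSpan_mul (IH x.1) (inSpan_pow (inSpan_U x.2) r)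

end SchmidtAux

/-- For any positive integers `r`, `m`, `n`, every coefficient of
`∑_{k=0}^{n-1} (2k+1) · S_k^{(r)}(x)^m` is divisible by `n`. -/
theorem sum_schmidtPoly_pow_dvd (r m n : ℕ) (hr : 0 < r) (hm : 0 < m) (hn : 0 < n) :
    ∀ d : ℕ,
      (n : ℤ) ∣ (∑ k ∈ Finset.range n, (2 * (k : ℤ) + 1) • (schmidtPoly r k) ^ m).coeff d := by
  intro d
  have hco : (∑ k ∈ Finset.range n, (2 * (k : ℤ) + 1) • (schmidtPoly r k) ^ m).coeff d
      = ∑ k ∈ Finset.range n, (2 * (k : ℤ) + 1) * ((schmidtPoly r k ^ m).coeff d) := by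
    rw [Polynomial.finset_sum_coeff]
    exact Finset.sum_congr rfl fun k _ => by
      rw [Polynomial.coeff_smul, smul_eq_mul]
  rw [hco]
  exact SchmidtAux.dvd_weighted_sum (SchmidtAux.inSpan_coeff_pow r m hr d) n
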